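/- Let α = (α₁,α₂), β = (β₁,β₂) with α₁, α₂, β₁, β₂ > 0, let λ₁, λ₂ > 0, and let f ∈ L¹(ℝ²). Then the semigroup property holds: for almost every (t,s) ∈ ℝ², 𝕀₊^{α,λ}(𝕀₊^{β,λ}f)(t,s) = 𝕀₊^{α+β,λ}f(t,s), and likewise 𝕀₋^{α,λ}(𝕀₋^{β,λ}f)(t,s) = 𝕀₋^{α+β,λ}f(t,s), where α+β = (α₁+β₁, α₂+β₂). -/

import Mathlib

open MeasureTheory

/-- The tempered power kernel: `x ^ p * exp (-(lam * x))` for `x > 0`, and `0` otherwise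
(so `x₊ ^ p` is interpreted as `0` when `x ≤ 0`). -/
noncomputable def tk (p lam x : ℝ) : ℝ := if 0 < x then x ^ p * Real.exp (-(lam * x)) else 0

/-- The left (positive) two-parameter tempered fractional integral
`𝕀₊^{α,λ}f(t,s) = (Γ(α₁)Γ(α₂))⁻¹ ∫_{ℝ²} (t−u)₊^{α₁−1} e^{−λ₁(t−u)₊} (s−v)₊^{α₂−1}
e^{−λ₂(s−v)₊} f(u,v) du dv`. -/
noncomputable def Ip (a1 a2 l1 l2 : ℝ) (f : ℝ × ℝ → ℝ) (t s : ℝ) : ℝ :=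
  (Real.Gamma a1 * Real.Gamma a2)⁻¹ *
    ∫ u : ℝ × ℝ, tk (a1 - 1) l1 (t - u.1) * tk (a2 - 1) l2 (s - u.2) * f u

/-- The right (negative) two-parameter tempered fractional integral
`𝕀₋^{α,λ}f(t,s) = (Γ(α₁)Γ(α₂))⁻¹ ∫_{ℝ²} (u−t)₊^{α₁−1} e^{−λ₁(u−t)₊} (v−s)₊^{α₂−1}
e^{−λ₂(v−s)₊} f(u,v) du dv`. -/
noncomputable def Im (a1 a2 l1 l2 : ℝ) (f : ℝ × ℝ → ℝ) (t s : ℝ) : ℝ :=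
  (Real.Gamma a1 * Real.Gamma a2)⁻¹ *
    ∫ u : ℝ × ℝ, tk (a1 - 1) l1 (u.1 - t) * tk (a2 - 1) l2 (u.2 - s) * f u

open Set

lemma tk_of_pos {p lam x : ℝ} (hx : 0 < x) : tk p lam x = x ^ p * Real.exp (-(lam * x)) :=
  if_pos hx

lemma tk_of_nonpos {p lam x : ℝ} (hx : ¬ 0 < x) : tk p lam x = 0 := if_neg hx

lemma tk_eq_indicator (p lam : ℝ) :
    tk p lam = Set.indicator (Ioi (0:ℝ)) (fun x => x ^ p * Real.exp (-(lam * x))) := by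
  funext x
  simp [tk, Set.indicator, Set.mem_Ioi]

lemma tk_integrable {p lam : ℝ} (hp : -1 < p) (hl : 0 < lam) : Integrable (tk p lam) := by
  rw [tk_eq_indicator, integrable_indicator_iff measurableSet_Ioi]
  have h := integrableOn_rpow_mul_exp_neg_mul_rpow (p := 1) hp one_pos hl
  simpa [Real.rpow_one, neg_mul] using h

lemma beta_aux {a b x : ℝ} (ha : 0 < a) (hb : 0 < b) (hx : 0 < x) :
    ∫ y in (0:ℝ)..x, y ^ (a - 1) * (x - y) ^ (b - 1)
      = Real.Gamma a * Real.Gamma b / Real.Gamma (a + b) * x ^ (a + b - 1) := by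
  have key := Complex.betaIntegral_scaled (a : ℂ) (b : ℂ) hx
  have hG := Complex.Gamma_mul_Gamma_eq_betaIntegral
    (s := (a:ℂ)) (t := (b:ℂ)) (by simpa using ha) (by simpa using hb)
  have hGne : Complex.Gamma ((a:ℂ) + (b:ℂ)) ≠ 0 :=
    Complex.Gamma_ne_zero_of_re_pos (by simp [add_pos ha hb])
  have hbeta : Complex.betaIntegral (a:ℂ) (b:ℂ)
      = Complex.Gamma (a:ℂ) * Complex.Gamma (b:ℂ) / Complex.Gamma ((a:ℂ)+(b:ℂ)) := by
    rw [hG]; field_simp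
  have hcast : ((∫ y in (0:ℝ)..x, y ^ (a - 1) * (x - y) ^ (b - 1) : ℝ) : ℂ)
      = ∫ y in (0:ℝ)..x, (y:ℂ) ^ ((a:ℂ) - 1) * ((x:ℂ) - (y:ℂ)) ^ ((b:ℂ) - 1) := by
    rw [← intervalIntegral.integral_ofReal]
    apply intervalIntegral.integral_congr
    intro y hy
    rw [Set.uIcc_of_le hx.le] at hy
    dsimp only
    rw [Complex.ofReal_mul, Complex.ofReal_cpow hy.1,
      Complex.ofReal_cpow (by linarith [hy.2] : (0:ℝ) ≤ x - y)]
    push_cast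
    ring_nf
  have hrhs : ((Real.Gamma a * Real.Gamma b / Real.Gamma (a + b) * x ^ (a + b - 1) : ℝ) : ℂ)
      = (x:ℂ) ^ ((a:ℂ) + (b:ℂ) - 1) * Complex.betaIntegral (a:ℂ) (b:ℂ) := by
    rw [hbeta]
    push_cast [Complex.ofReal_cpow hx.le, Complex.Gamma_ofReal]
    rw [show ((a:ℂ)+(b:ℂ)) = ((a+b:ℝ):ℂ) by push_cast; ring, Complex.Gamma_ofReal]
    ring
  have := hcast.trans (key.trans hrhs.symm)
  exact_mod_cast this

lemma conv1 {a b l : ℝ} (ha : 0 < a) (hb : 0 < b) (x : ℝ) :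
    ∫ y : ℝ, tk (a - 1) l y * tk (b - 1) l (x - y)
      = Real.Gamma a * Real.Gamma b / Real.Gamma (a + b) * tk (a + b - 1) l x := by
  by_cases hx : 0 < x
  · have hind : (fun y => tk (a - 1) l y * tk (b - 1) l (x - y))
        = Set.indicator (Ioo 0 x)
            (fun y => Real.exp (-(l * x)) * (y ^ (a - 1) * (x - y) ^ (b - 1))) := by
      funext y
      rw [Set.indicator]
      by_cases hy : y ∈ Ioo (0:ℝ) x
      · rw [if_pos hy]
        obtain ⟨h1, h2⟩ := hy
        have hexp : Real.exp (-(l * y)) * Real.exp (-(l * (x - y))) = Real.exp (-(l * x)) := by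
          rw [← Real.exp_add]; ring_nf
        rw [tk_of_pos h1, tk_of_pos (by linarith : (0:ℝ) < x - y), ← hexp]; ring
      · rw [if_neg hy]
        simp only [Set.mem_Ioo, not_and, not_lt] at hy
        by_cases h1 : 0 < y
        · rw [tk_of_nonpos (x := x - y) (by linarith [hy h1]), mul_zero]
        · rw [tk_of_nonpos h1, zero_mul]
    rw [hind, integral_indicator measurableSet_Ioo, MeasureTheory.integral_const_mul,
      ← integral_Ioc_eq_integral_Ioo, ← intervalIntegral.integral_of_le hx.le,
      beta_aux ha hb hx, tk_of_pos hx]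
    ring
  · have h0 : (fun y => tk (a - 1) l y * tk (b - 1) l (x - y)) = fun _ => (0:ℝ) := by
      funext y
      by_cases h1 : 0 < y
      · rw [tk_of_nonpos (x := x - y) (by push_neg at hx; linarith), mul_zero]
      · rw [tk_of_nonpos h1, zero_mul]
    rw [h0, integral_zero, tk_of_nonpos hx, mul_zero]

/-- The two-dimensional tempered kernel. -/
noncomputable def Kk (p1 p2 l1 l2 : ℝ) : ℝ × ℝ → ℝ := fun x => tk p1 l1 x.1 * tk p2 l2 x.2

lemma Kk_integrable {p1 p2 l1 l2 : ℝ} (hp1 : -1 < p1) (hp2 : -1 < p2)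
    (hl1 : 0 < l1) (hl2 : 0 < l2) : Integrable (Kk p1 p2 l1 l2) := by
  rw [show (volume : Measure (ℝ × ℝ)) = (volume : Measure ℝ).prod volume from
    MeasureTheory.Measure.volume_eq_prod ℝ ℝ]
  exact (tk_integrable hp1 hl1).mul_prod (tk_integrable hp2 hl2)

lemma Ip_eq_conv (a1 a2 l1 l2 : ℝ) (f : ℝ × ℝ → ℝ) (t s : ℝ) :
    Ip a1 a2 l1 l2 f t s = (Real.Gamma a1 * Real.Gamma a2)⁻¹ *
      MeasureTheory.convolution (Kk (a1-1) (a2-1) l1 l2) f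
        (ContinuousLinearMap.mul ℝ ℝ) volume (t, s) := by
  rw [Ip, MeasureTheory.convolution_eq_swap]
  simp only [ContinuousLinearMap.mul_apply', Kk, Prod.fst_sub, Prod.snd_sub]

lemma Kconv {a1 a2 b1 b2 l1 l2 : ℝ} (ha1 : 0 < a1) (ha2 : 0 < a2) (hb1 : 0 < b1)
    (hb2 : 0 < b2) :
    MeasureTheory.convolution (Kk (a1-1) (a2-1) l1 l2) (Kk (b1-1) (b2-1) l1 l2)
        (ContinuousLinearMap.mul ℝ ℝ) volume
      = (Real.Gamma a1 * Real.Gamma b1 / Real.Gamma (a1+b1) *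
          (Real.Gamma a2 * Real.Gamma b2 / Real.Gamma (a2+b2)))
          • Kk (a1+b1-1) (a2+b2-1) l1 l2 := by
  funext x
  rw [MeasureTheory.convolution_def]
  simp only [ContinuousLinearMap.mul_apply', Kk, Prod.fst_sub, Prod.snd_sub,
    Pi.smul_apply, smul_eq_mul]
  have hre : ∀ u : ℝ × ℝ,
      tk (a1-1) l1 u.1 * tk (a2-1) l2 u.2 * (tk (b1-1) l1 (x.1 - u.1) * tk (b2-1) l2 (x.2 - u.2))
        = (fun y => tk (a1-1) l1 y * tk (b1-1) l1 (x.1 - y)) u.1 *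
          (fun y => tk (a2-1) l2 y * tk (b2-1) l2 (x.2 - y)) u.2 := by
    intro u; dsimp only; ring
  simp_rw [hre]
  rw [show (volume : Measure (ℝ × ℝ)) = (volume : Measure ℝ).prod volume from
    MeasureTheory.Measure.volume_eq_prod ℝ ℝ]
  have h2 : ∫ (t : ℝ × ℝ), (fun y => tk (a1-1) l1 y * tk (b1-1) l1 (x.1 - y)) t.1 *
      (fun y => tk (a2-1) l2 y * tk (b2-1) l2 (x.2 - y)) t.2
        ∂((volume : Measure ℝ).prod volume)
      = (∫ y, tk (a1-1) l1 y * tk (b1-1) l1 (x.1 - y)) *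
        ∫ y, tk (a2-1) l2 y * tk (b2-1) l2 (x.2 - y) :=
    MeasureTheory.integral_prod_mul (fun y => tk (a1-1) l1 y * tk (b1-1) l1 (x.1 - y))
      (fun y => tk (a2-1) l2 y * tk (b2-1) l2 (x.2 - y))
  rw [h2, conv1 ha1 hb1, conv1 ha2 hb2]
  ring

lemma main_Ip (a1 a2 b1 b2 l1 l2 : ℝ)
    (ha1 : 0 < a1) (ha2 : 0 < a2) (hb1 : 0 < b1) (hb2 : 0 < b2)
    (hl1 : 0 < l1) (hl2 : 0 < l2) (f : ℝ × ℝ → ℝ) (hf : Integrable f) :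
    ∀ᵐ p : ℝ × ℝ,
        Ip a1 a2 l1 l2 (fun u => Ip b1 b2 l1 l2 f u.1 u.2) p.1 p.2
          = Ip (a1 + b1) (a2 + b2) l1 l2 f p.1 p.2 := by
  set L := ContinuousLinearMap.mul ℝ ℝ with hL
  set Ka := Kk (a1-1) (a2-1) l1 l2 with hKadef
  set Kb := Kk (b1-1) (b2-1) l1 l2 with hKbdef
  have hKa : Integrable Ka := Kk_integrable (by linarith) (by linarith) hl1 hl2
  have hKb : Integrable Kb := Kk_integrable (by linarith) (by linarith) hl1 hl2
  have hgk_int : Integrable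
      (MeasureTheory.convolution (fun x => ‖Kb x‖) (fun x => ‖f x‖) L volume) :=
    hKb.norm.integrable_convolution L hf.norm
  have hassoc : ∀ᵐ p : ℝ × ℝ,
      MeasureTheory.convolution (MeasureTheory.convolution Ka Kb L volume) f L volume p
        = MeasureTheory.convolution Ka (MeasureTheory.convolution Kb f L volume) L volume p := by
    filter_upwards [hKa.norm.ae_convolution_exists L hgk_int] with x₀ hx₀
    exact MeasureTheory.convolution_assoc L L L L (fun x y z => mul_assoc x y z)
      hKa.aestronglyMeasurable hKb.aestronglyMeasurable hf.aestronglyMeasurable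
      (hKa.ae_convolution_exists L hKb) (hKb.norm.ae_convolution_exists L hf.norm) hx₀
  have hfun : (fun u : ℝ × ℝ => Ip b1 b2 l1 l2 f u.1 u.2)
      = (Real.Gamma b1 * Real.Gamma b2)⁻¹ • MeasureTheory.convolution Kb f L volume := by
    funext u
    rw [Ip_eq_conv]
    simp [smul_eq_mul]
    exact Or.inl rfl
  filter_upwards [hassoc] with p hp
  rw [Ip_eq_conv, Ip_eq_conv, hfun, MeasureTheory.convolution_smul]
  have hGa1 := Real.Gamma_pos_of_pos ha1
  have hGa2 := Real.Gamma_pos_of_pos ha2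
  have hGb1 := Real.Gamma_pos_of_pos hb1
  have hGb2 := Real.Gamma_pos_of_pos hb2
  have hGab1 := Real.Gamma_pos_of_pos (add_pos ha1 hb1)
  have hGab2 := Real.Gamma_pos_of_pos (add_pos ha2 hb2)
  have hpp : (p.1, p.2) = p := rfl
  rw [hpp, Pi.smul_apply, smul_eq_mul, ← hp, Kconv ha1 ha2 hb1 hb2,
    MeasureTheory.smul_convolution, Pi.smul_apply, smul_eq_mul]
  field_simp
  ring

lemma Im_eq_Ip (a1 a2 l1 l2 : ℝ) (f : ℝ × ℝ → ℝ) (t s : ℝ) :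
    Im a1 a2 l1 l2 f t s = Ip a1 a2 l1 l2 (fun u => f (-u)) (-t) (-s) := by
  rw [Im, Ip]
  congr 1
  have h := integral_neg_eq_self
    (fun u : ℝ × ℝ => tk (a1-1) l1 (-t - u.1) * tk (a2-1) l2 (-s - u.2) * f (-u)) volume
  rw [← h]
  congr 1
  funext u
  simp only [Prod.fst_neg, Prod.snd_neg, neg_neg, sub_neg_eq_add]
  ring_nf

/-- semigroup property of the two-parameter tempered fractional integrals:
for `f ∈ L¹(ℝ²)`, almost everywhere `𝕀₊^{α,λ}(𝕀₊^{β,λ}f) = 𝕀₊^{α+β,λ}f` and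
`𝕀₋^{α,λ}(𝕀₋^{β,λ}f) = 𝕀₋^{α+β,λ}f`. -/
theorem tempered_fractional_integral_semigroup (a1 a2 b1 b2 l1 l2 : ℝ)
    (ha1 : 0 < a1) (ha2 : 0 < a2) (hb1 : 0 < b1) (hb2 : 0 < b2)
    (hl1 : 0 < l1) (hl2 : 0 < l2) (f : ℝ × ℝ → ℝ) (hf : Integrable f) :
    (∀ᵐ p : ℝ × ℝ,
        Ip a1 a2 l1 l2 (fun u => Ip b1 b2 l1 l2 f u.1 u.2) p.1 p.2
          = Ip (a1 + b1) (a2 + b2) l1 l2 f p.1 p.2) ∧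
    (∀ᵐ p : ℝ × ℝ,
        Im a1 a2 l1 l2 (fun u => Im b1 b2 l1 l2 f u.1 u.2) p.1 p.2
          = Im (a1 + b1) (a2 + b2) l1 l2 f p.1 p.2) := by
  refine ⟨main_Ip a1 a2 b1 b2 l1 l2 ha1 ha2 hb1 hb2 hl1 hl2 f hf, ?_⟩
  have hneg : MeasurePreserving (fun p : ℝ × ℝ => -p) volume volume :=
    Measure.measurePreserving_neg _
  have hf' : Integrable (fun u : ℝ × ℝ => f (-u)) :=
    (hneg.integrable_comp hf.aestronglyMeasurable).mpr hf
  have hmain := main_Ip a1 a2 b1 b2 l1 l2 ha1 ha2 hb1 hb2 hl1 hl2 _ hf'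
  filter_upwards [hneg.quasiMeasurePreserving.ae hmain] with p hp
  have hcomp : (fun u : ℝ × ℝ => (fun w : ℝ × ℝ => Im b1 b2 l1 l2 f w.1 w.2) (-u))
      = fun u : ℝ × ℝ => Ip b1 b2 l1 l2 (fun v => f (-v)) u.1 u.2 := by
    funext u
    simp only [Prod.fst_neg, Prod.snd_neg]
    rw [Im_eq_Ip, neg_neg, neg_neg]
  rw [Im_eq_Ip a1 a2 l1 l2 (fun u => Im b1 b2 l1 l2 f u.1 u.2) p.1 p.2, hcomp,
    Im_eq_Ip (a1+b1) (a2+b2) l1 l2 f p.1 p.2]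
  simpa using hp
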